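/- Let B = ⟨a, t ∣ t⁻¹a²t = a³⟩ be the Baumslag–Solitar group BS(2,3) and let F be the subgroup of B generated by t and [a, t⁻¹at]. Then the set of double cosets F\B/F is infinite. -/

import Mathlib

/-- The generator `a` of the Baumslag–Solitar group `BS(2,3)`,
as an element of the free group on `Bool` (`true ↦ a`, `false ↦ t`). -/
def bsA : FreeGroup Bool := FreeGroup.of true

/-- The generator `t` of the Baumslag–Solitar group `BS(2,3)`. -/
def bsT : FreeGroup Bool := FreeGroup.of false

/-- The single relator `t⁻¹ a² t a⁻³` of `BS(2,3)`. -/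
def bsRels : Set (FreeGroup Bool) := {bsT⁻¹ * bsA ^ 2 * bsT * bsA ^ (-3 : ℤ)}

/-- The Baumslag–Solitar group `BS(2,3) = ⟨a, t ∣ t⁻¹a²t = a³⟩`. -/
abbrev BS23 : Type := PresentedGroup bsRels

/-- The image of the generator `a` in `BS(2,3)`. -/
def aB : BS23 := PresentedGroup.of true

/-- The image of the generator `t` in `BS(2,3)`. -/
def tB : BS23 := PresentedGroup.of false

/-- The commutator with the convention `[x, y] := x⁻¹y⁻¹xy`. -/
def pcomm {G : Type*} [Group G] (x y : G) : G := x⁻¹ * y⁻¹ * x * y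

/-- The element `c := [a, t⁻¹at]` of `BS(2,3)`. -/
def cB : BS23 := pcomm aB (tB⁻¹ * aB * tB)

/-- The subgroup `F = ⟨t, [a, t⁻¹at]⟩` of `BS(2,3)`. -/
def Fsub : Subgroup BS23 := Subgroup.closure {tB, cB}

/- ### Auxiliary constructions -/

/-- Translation by 1 on ℚ. -/
noncomputable def Aperm : Equiv.Perm ℚ := Equiv.addRight (1 : ℚ)

/-- Multiplication by 2/3 on ℚ. -/
noncomputable def Tperm : Equiv.Perm ℚ := Equiv.mulLeft₀ (2/3 : ℚ) (by norm_num)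

lemma Aperm_apply (x : ℚ) : Aperm x = x + 1 := rfl

lemma Aperm_inv_apply (x : ℚ) : Aperm⁻¹ x = x - 1 := by
  rw [show Aperm⁻¹ = Aperm.symm from rfl, Equiv.symm_apply_eq, Aperm_apply]
  ring

lemma Tperm_apply (x : ℚ) : Tperm x = 2/3 * x := rfl

lemma Tperm_inv_apply (x : ℚ) : Tperm⁻¹ x = (2/3 : ℚ)⁻¹ * x := rfl

lemma Aperm_pow (k : ℕ) : ∀ x : ℚ, (Aperm ^ k) x = x + k := by
  induction k with
  | zero => simp
  | succ n ih =>
    intro x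
    rw [pow_succ, Equiv.Perm.mul_apply, Aperm_apply, ih]
    push_cast; ring

lemma Aperm_zpow (m : ℤ) : ∀ x : ℚ, (Aperm ^ m) x = x + m := by
  induction m using Int.induction_on with
  | zero => simp
  | succ n ih =>
    intro x
    rw [zpow_add_one, Equiv.Perm.mul_apply, Aperm_apply, ih]
    push_cast; ring
  | pred n ih =>
    intro x
    rw [zpow_sub_one, Equiv.Perm.mul_apply, Aperm_inv_apply, ih]
    push_cast; ring

lemma Tperm_zpow (m : ℤ) : ∀ x : ℚ, (Tperm ^ m) x = (2/3 : ℚ) ^ m * x := by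
  induction m using Int.induction_on with
  | zero => simp
  | succ n ih =>
    intro x
    rw [zpow_add_one, Equiv.Perm.mul_apply, Tperm_apply, ih,
      zpow_add_one₀ (by norm_num : (2/3 : ℚ) ≠ 0)]
    ring
  | pred n ih =>
    intro x
    rw [zpow_sub_one, Equiv.Perm.mul_apply, Tperm_inv_apply, ih,
      zpow_sub_one₀ (by norm_num : (2/3 : ℚ) ≠ 0)]
    ring

/-- The assignment of generators. -/
noncomputable def bsGen : Bool → Equiv.Perm ℚ := fun b => if b then Aperm else Tperm

lemma bsRel_holds : ∀ r ∈ bsRels, FreeGroup.lift bsGen r = 1 := by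
  rintro r hr
  simp only [bsRels, Set.mem_singleton_iff] at hr
  subst hr
  simp only [bsT, bsA, map_mul, map_inv, map_pow, map_zpow, FreeGroup.lift_apply_of, bsGen,
    if_true, if_false, Bool.false_eq_true]
  ext x
  rw [Equiv.Perm.mul_apply, Equiv.Perm.mul_apply, Equiv.Perm.mul_apply, Aperm_zpow,
    Tperm_apply, pow_two, Equiv.Perm.mul_apply, Aperm_apply, Aperm_apply,
    Tperm_inv_apply, Equiv.Perm.one_apply]
  push_cast; ring

/-- The homomorphism `BS(2,3) → Perm ℚ`. -/
noncomputable def phiB : BS23 →* Equiv.Perm ℚ := PresentedGroup.toGroup bsRel_holds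

lemma phiB_a : phiB aB = Aperm := PresentedGroup.toGroup.of bsRel_holds

lemma phiB_t : phiB tB = Tperm := PresentedGroup.toGroup.of bsRel_holds

lemma phiB_c : phiB cB = 1 := by
  have h : phiB (tB⁻¹ * aB * tB) = Tperm⁻¹ * Aperm * Tperm := by
    rw [map_mul, map_mul, map_inv, phiB_a, phiB_t]
  rw [cB, pcomm, map_mul, map_mul, map_mul, map_inv, map_inv, h, phiB_a]
  ext x
  simp only [Equiv.Perm.mul_apply, Equiv.Perm.one_apply, mul_inv_rev, inv_inv,
    Aperm_apply, Aperm_inv_apply, Tperm_apply, Tperm_inv_apply]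
  ring

lemma phiB_F {f : BS23} (hf : f ∈ Fsub) : ∃ m : ℤ, phiB f = Tperm ^ m := by
  induction hf using Subgroup.closure_induction with
  | mem x hx =>
    rcases hx with h | h
    · exact ⟨1, by rw [h, phiB_t, zpow_one]⟩
    · exact ⟨0, by rw [h, phiB_c, zpow_zero]⟩
  | one => exact ⟨0, by rw [map_one, zpow_zero]⟩
  | mul x y hx hy ihx ihy =>
    obtain ⟨m, hm⟩ := ihx
    obtain ⟨n, hn⟩ := ihy
    exact ⟨m + n, by rw [map_mul, hm, hn, zpow_add]⟩
  | inv x hx ih =>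
    obtain ⟨m, hm⟩ := ih
    exact ⟨-m, by rw [map_inv, hm, zpow_neg]⟩

lemma v3_pow23 (m : ℤ) : padicValRat 3 ((2/3 : ℚ) ^ m) = -m := by
  haveI : Fact (Nat.Prime 3) := ⟨by norm_num⟩
  have h2 : padicValRat 3 (2 : ℚ) = 0 := by
    rw [show (2 : ℚ) = ((2 : ℕ) : ℚ) by norm_num, padicValRat.of_nat,
      padicValNat.eq_zero_of_not_dvd (by norm_num)]
    norm_num
  have h3 : padicValRat 3 (3 : ℚ) = 1 := padicValRat.self (by norm_num)
  have hbase : padicValRat 3 (2/3 : ℚ) = -1 := by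
    rw [padicValRat.div (by norm_num) (by norm_num), h2, h3]
    ring
  have hne : (2/3 : ℚ) ≠ 0 := by norm_num
  induction m using Int.induction_on with
  | zero => simp
  | succ n ih =>
    rw [zpow_add_one₀ hne, padicValRat.mul (zpow_ne_zero _ hne) hne, ih, hbase]
    ring
  | pred n ih =>
    rw [zpow_sub_one₀ hne, padicValRat.mul (zpow_ne_zero _ hne) (inv_ne_zero hne),
      padicValRat.inv, ih, hbase]
    ring

lemma v3_two_pow (n : ℕ) : padicValRat 3 ((2 : ℚ) ^ n) = 0 := by
  haveI : Fact (Nat.Prime 3) := ⟨by norm_num⟩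
  rw [padicValRat.pow (q := 2),
    show (2 : ℚ) = ((2 : ℕ) : ℚ) by norm_num, padicValRat.of_nat,
    padicValNat.eq_zero_of_not_dvd (by norm_num)]
  norm_num

/-- The set of double cosets `F \ BS(2,3) / F`, where `F = ⟨t, [a, t⁻¹at]⟩`,
is infinite. -/
theorem doubleCosets_infinite :
    Infinite (DoubleCoset.Quotient (Fsub : Set BS23) (Fsub : Set BS23)) := by
  apply Infinite.of_injective (fun n : ℕ => DoubleCoset.mk Fsub Fsub (aB ^ (2 ^ n)))
  intro n n' h
  rw [DoubleCoset.eq] at h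
  obtain ⟨f, hf, k, hk, hEq⟩ := h
  obtain ⟨m, hm⟩ := phiB_F hf
  obtain ⟨m', hm'⟩ := phiB_F hk
  -- apply phiB and evaluate at 0
  have key : ((2 : ℚ) ^ n') = (2/3 : ℚ) ^ m * (2 : ℚ) ^ n := by
    have := congrArg (fun σ : Equiv.Perm ℚ => σ 0) (congrArg phiB hEq)
    simp only [map_mul, map_pow, phiB_a, hm, hm', Equiv.Perm.mul_apply] at this
    rw [Tperm_zpow, Tperm_zpow, Aperm_pow, Aperm_pow] at this
    simp only [mul_zero, zero_add] at this
    push_cast at this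
    exact this
  have hv := congrArg (padicValRat 3) key
  haveI : Fact (Nat.Prime 3) := ⟨by norm_num⟩
  rw [v3_two_pow, padicValRat.mul (zpow_ne_zero _ (by norm_num)) (by positivity),
    v3_pow23, v3_two_pow, add_zero] at hv
  have hm0 : m = 0 := by omega
  rw [hm0, zpow_zero, one_mul] at key
  have h2 : (2 : ℕ) ^ n' = 2 ^ n := by exact_mod_cast key
  exact (Nat.pow_right_injective le_rfl h2).symm
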